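/- Let n ≥ 6, let C = x_0, x_1, …, x_{n−1}, x_0 be a cycle of length n, and let a, b, c be three pairwise distinct colors. If the five edges x_0x_1, x_1x_2, x_2x_3, x_3x_4, x_4x_5 are pre-colored a, b, c, b, a respectively, then this partial edge coloring can be extended to a 3-star edge coloring of C using only the colors {a, b, c}. -/
import Mathlib

set_option maxHeartbeats 10000000

def Fc (n k : ℕ) : ℕ :=
  if k = 0 then 0 else if k = 1 then 1 else if k = 2 then 2 else
  if k = 3 then 1 else if k = 4 then 0 else
  if n % 3 = 2 then
    (if k = n - 1 then 1 else if k % 3 = 0 then 2 else if k % 3 = 1 then 0 else 1)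
  else if n % 3 = 1 then
    (if k % 3 = 0 then 1 else if k % 3 = 1 then 0 else 2)
  else (if k % 3 = 0 then 0 else if k % 3 = 1 then 1 else 2)

lemma Fc_lt (n k : ℕ) : Fc n k < 3 := by unfold Fc; split_ifs <;> first | exact ‹False›.elim | omega | tauto

lemma Fc_small (n k : ℕ) (h : k ≤ 4) :
    Fc n k = if k = 0 then 0 else if k = 1 then 1 else if k = 2 then 2 else
      if k = 3 then 1 else 0 := by
  unfold Fc; split_ifs <;> first | exact ‹False›.elim | omega | tauto

lemma Fc_t0 (n k : ℕ) (hn : n % 3 = 0) (h5 : 5 ≤ k) : Fc n k = k % 3 := by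
  unfold Fc; split_ifs <;> first | exact ‹False›.elim | omega | tauto

lemma Fc_t1 (n k : ℕ) (hn : n % 3 = 1) (h5 : 5 ≤ k) :
    Fc n k = if k % 3 = 0 then 1 else if k % 3 = 1 then 0 else 2 := by
  unfold Fc; split_ifs <;> first | exact ‹False›.elim | omega | tauto

lemma Fc_t2 (n k : ℕ) (hn : n % 3 = 2) (h5 : 5 ≤ k) (hk : k ≠ n - 1) :
    Fc n k = if k % 3 = 0 then 2 else if k % 3 = 1 then 0 else 1 := by
  unfold Fc; split_ifs <;> first | exact ‹False›.elim | omega | tauto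

lemma Fc_last (n : ℕ) (hn : n % 3 = 2) (h6 : 6 ≤ n) : Fc n (n - 1) = 1 := by
  unfold Fc; split_ifs <;> first | exact ‹False›.elim | omega | tauto

lemma wrap (n j m : ℕ) (hj : j ≤ n) (hm : j ≤ m) (h : m - j < n) :
    (n - j + m) % n = m - j := by
  have e : n - j + m = n + (m - j) := by omega
  rw [e, Nat.add_mod_left, Nat.mod_eq_of_lt h]

lemma Fc_proper (n : ℕ) (hn : 6 ≤ n) : ∀ k < n, Fc n k ≠ Fc n ((k+1) % n) := by
  rcases eq_or_ne n 6 with rfl | h6; · decide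
  rcases eq_or_ne n 7 with rfl | h7; · decide
  rcases eq_or_ne n 8 with rfl | h8; · decide
  have hn9 : 9 ≤ n := by omega
  have h3 : n % 3 = 0 ∨ n % 3 = 1 ∨ n % 3 = 2 := by omega
  intro k hk
  rcases eq_or_ne k (n-1) with rfl | hd
  · rw [wrap n 1 1 (by omega) le_rfl (by omega), Fc_small n 0 (by omega)]
    rcases h3 with h | h | h
    · rw [Fc_t0 n (n-1) h (by omega)]; split_ifs <;> first | exact ‹False›.elim | omega | tauto
    · rw [Fc_t1 n (n-1) h (by omega)]; split_ifs <;> first | exact ‹False›.elim | omega | tauto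
    · rw [Fc_last n h hn]; split_ifs <;> first | exact ‹False›.elim | omega | tauto
  have hlt : (k+1) % n = k + 1 := Nat.mod_eq_of_lt (by omega)
  rw [hlt]
  rcases Nat.lt_or_ge k 4 with hs | hs
  · rw [Fc_small n k (by omega), Fc_small n (k+1) (by omega)]; split_ifs <;> first | exact ‹False›.elim | omega | tauto
  rcases eq_or_ne k 4 with rfl | hs4
  · rw [Fc_small n 4 (by omega)]
    rcases h3 with h | h | h
    · rw [Fc_t0 n 5 h (by omega)]; split_ifs <;> first | exact ‹False›.elim | omega | tauto
    · rw [Fc_t1 n 5 h (by omega)]; split_ifs <;> first | exact ‹False›.elim | omega | tauto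
    · rw [Fc_t2 n 5 h (by omega) (by omega)]; split_ifs <;> first | exact ‹False›.elim | omega | tauto
  -- now 5 ≤ k ≤ n-2
  rcases h3 with h | h | h
  · rw [Fc_t0 n k h (by omega), Fc_t0 n (k+1) h (by omega)]; omega
  · rw [Fc_t1 n k h (by omega), Fc_t1 n (k+1) h (by omega)]; split_ifs <;> first | exact ‹False›.elim | omega | tauto
  · rcases eq_or_ne (k+1) (n-1) with he | he
    · rw [Fc_t2 n k h (by omega) (by omega), he, Fc_last n h hn]; split_ifs <;> first | exact ‹False›.elim | omega | tauto
    · rw [Fc_t2 n k h (by omega) (by omega), Fc_t2 n (k+1) h (by omega) he]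
      split_ifs <;> first | exact ‹False›.elim | omega | tauto

lemma Fc_star (n : ℕ) (hn : 6 ≤ n) : ∀ k < n,
    ¬ (Fc n k = Fc n ((k+2) % n) ∧ Fc n ((k+1) % n) = Fc n ((k+3) % n)) := by
  rcases eq_or_ne n 6 with rfl | h6; · decide
  rcases eq_or_ne n 7 with rfl | h7; · decide
  rcases eq_or_ne n 8 with rfl | h8; · decide
  have hn9 : 9 ≤ n := by omega
  have h3 : n % 3 = 0 ∨ n % 3 = 1 ∨ n % 3 = 2 := by omega
  intro k hk
  rcases eq_or_ne k (n-1) with rfl | hd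
  · rw [wrap n 1 1 (by omega) le_rfl (by omega), wrap n 1 2 (by omega) (by omega) (by omega),
      wrap n 1 3 (by omega) (by omega) (by omega),
      Fc_small n 0 (by omega), Fc_small n 1 (by omega), Fc_small n 2 (by omega)]
    split_ifs <;> first | exact ‹False›.elim | omega | tauto
  rcases eq_or_ne k (n-2) with rfl | hc
  · rw [Nat.mod_eq_of_lt (show n-2+1 < n by omega), wrap n 2 2 (by omega) le_rfl (by omega),
      wrap n 2 3 (by omega) (by omega) (by omega), (show n-2+1 = n-1 by omega),
      Fc_small n 0 (by omega), Fc_small n 1 (by omega)]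
    rcases h3 with h | h | h
    · rw [Fc_t0 n (n-2) h (by omega), Fc_t0 n (n-1) h (by omega)]
      split_ifs <;> first | exact ‹False›.elim | omega | tauto
    · rw [Fc_t1 n (n-2) h (by omega), Fc_t1 n (n-1) h (by omega)]
      split_ifs <;> first | exact ‹False›.elim | omega | tauto
    · rw [Fc_t2 n (n-2) h (by omega) (by omega), Fc_last n h hn]
      split_ifs <;> first | exact ‹False›.elim | omega | tauto
  rcases eq_or_ne k (n-3) with rfl | hb
  · rw [Nat.mod_eq_of_lt (show n-3+1 < n by omega), Nat.mod_eq_of_lt (show n-3+2 < n by omega),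
      wrap n 3 3 (by omega) le_rfl (by omega), (show n-3+1 = n-2 by omega),
      (show n-3+2 = n-1 by omega), Fc_small n 0 (by omega)]
    rcases h3 with h | h | h
    · rw [Fc_t0 n (n-3) h (by omega), Fc_t0 n (n-2) h (by omega), Fc_t0 n (n-1) h (by omega)]
      split_ifs <;> first | exact ‹False›.elim | omega | tauto
    · rw [Fc_t1 n (n-3) h (by omega), Fc_t1 n (n-2) h (by omega), Fc_t1 n (n-1) h (by omega)]
      split_ifs <;> first | exact ‹False›.elim | omega | tauto
    · rw [Fc_t2 n (n-3) h (by omega) (by omega), Fc_t2 n (n-2) h (by omega) (by omega),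
        Fc_last n h hn]
      split_ifs <;> first | exact ‹False›.elim | omega | tauto
  -- now k + 3 ≤ n - 1, no wrap
  rw [Nat.mod_eq_of_lt (show k+1 < n by omega), Nat.mod_eq_of_lt (show k+2 < n by omega),
    Nat.mod_eq_of_lt (show k+3 < n by omega)]
  rcases Nat.lt_or_ge k 2 with hs | hs
  · rw [Fc_small n k (by omega), Fc_small n (k+1) (by omega), Fc_small n (k+2) (by omega),
      Fc_small n (k+3) (by omega)]
    split_ifs <;> first | exact ‹False›.elim | omega | tauto
  rcases eq_or_ne k 2 with rfl | hs2
  · rw [Fc_small n 2 (by omega), Fc_small n 3 (by omega), Fc_small n 4 (by omega)]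
    rcases h3 with h | h | h
    · rw [Fc_t0 n 5 h (by omega)]; split_ifs <;> first | exact ‹False›.elim | omega | tauto
    · rw [Fc_t1 n 5 h (by omega)]; split_ifs <;> first | exact ‹False›.elim | omega | tauto
    · rw [Fc_t2 n 5 h (by omega) (by omega)]
      split_ifs <;> first | exact ‹False›.elim | omega | tauto
  rcases eq_or_ne k 3 with rfl | hs3
  · rw [Fc_small n 3 (by omega), Fc_small n 4 (by omega)]
    rcases h3 with h | h | h
    · rw [Fc_t0 n 5 h (by omega), Fc_t0 n 6 h (by omega)]
      split_ifs <;> first | exact ‹False›.elim | omega | tauto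
    · rw [Fc_t1 n 5 h (by omega), Fc_t1 n 6 h (by omega)]
      split_ifs <;> first | exact ‹False›.elim | omega | tauto
    · rw [Fc_t2 n 5 h (by omega) (by omega), Fc_t2 n 6 h (by omega) (by omega)]
      split_ifs <;> first | exact ‹False›.elim | omega | tauto
  rcases eq_or_ne k 4 with rfl | hs4
  · rw [Fc_small n 4 (by omega)]
    rcases h3 with h | h | h
    · rw [Fc_t0 n 5 h (by omega), Fc_t0 n 6 h (by omega), Fc_t0 n 7 h (by omega)]
      split_ifs <;> first | exact ‹False›.elim | omega | tauto
    · rw [Fc_t1 n 5 h (by omega), Fc_t1 n 6 h (by omega), Fc_t1 n 7 h (by omega)]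
      split_ifs <;> first | exact ‹False›.elim | omega | tauto
    · rw [Fc_t2 n 5 h (by omega) (by omega), Fc_t2 n 6 h (by omega) (by omega),
        Fc_t2 n 7 h (by omega) (by omega)]
      split_ifs <;> first | exact ‹False›.elim | omega | tauto
  -- now 5 ≤ k ≤ n - 4
  rcases h3 with h | h | h
  · rw [Fc_t0 n k h (by omega), Fc_t0 n (k+1) h (by omega), Fc_t0 n (k+2) h (by omega),
      Fc_t0 n (k+3) h (by omega)]
    omega
  · rw [Fc_t1 n k h (by omega), Fc_t1 n (k+1) h (by omega), Fc_t1 n (k+2) h (by omega),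
      Fc_t1 n (k+3) h (by omega)]
    split_ifs <;> first | exact ‹False›.elim | omega | tauto
  · rcases eq_or_ne (k+3) (n-1) with he | he
    · rw [Fc_t2 n k h (by omega) (by omega), Fc_t2 n (k+1) h (by omega) (by omega),
        Fc_t2 n (k+2) h (by omega) (by omega), he, Fc_last n h hn]
      split_ifs <;> first | exact ‹False›.elim | omega | tauto
    · rw [Fc_t2 n k h (by omega) (by omega), Fc_t2 n (k+1) h (by omega) (by omega),
        Fc_t2 n (k+2) h (by omega) (by omega), Fc_t2 n (k+3) h (by omega) he]
      split_ifs <;> first | exact ‹False›.elim | omega | tauto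


/-- A 3-star edge coloring of the cycle `x_0, x_1, …, x_{n-1}, x_0`, where the edge
`x_i x_{i+1}` (indices mod `n`) receives color `g i`: the coloring is proper
(adjacent edges get distinct colors) and no path or cycle with four edges is bicolored
(for a proper coloring this means no four consecutive edges are colored `a b a b`). -/
def IsStarEdgeColoringCycle {α : Type*} (n : ℕ) (g : ZMod n → α) : Prop :=
  (∀ i, g i ≠ g (i + 1)) ∧ ∀ i, ¬ (g i = g (i + 2) ∧ g (i + 1) = g (i + 3))

theorem stmt_2 {α : Type*} (n : ℕ) (hn : 6 ≤ n)
    (a b c : α) (hab : a ≠ b) (hac : a ≠ c) (hbc : b ≠ c) :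
    ∃ g : ZMod n → α, (∀ i, g i ∈ ({a, b, c} : Set α)) ∧
      IsStarEdgeColoringCycle n g ∧ g 0 = a ∧ g 1 = b ∧ g 2 = c ∧ g 3 = b ∧ g 4 = a := by
  haveI : NeZero n := ⟨by omega⟩
  classical
  set e : ℕ → α := fun m => if m = 0 then a else if m = 1 then b else c with he
  have e_inj : ∀ x < 3, ∀ y < 3, e x = e y → x = y := by
    intro x hx y hy
    interval_cases x <;> interval_cases y <;>
      simp [he, hab, hac, hbc, hab.symm, hac.symm, hbc.symm]
  have c1 : ((1 : ZMod n)).val = 1 := by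
    rw [show (1 : ZMod n) = ((1 : ℕ) : ZMod n) by norm_cast]
    exact ZMod.val_cast_of_lt (by omega)
  have c2 : ((2 : ZMod n)).val = 2 := by
    rw [show (2 : ZMod n) = ((2 : ℕ) : ZMod n) by norm_cast]
    exact ZMod.val_cast_of_lt (by omega)
  have c3 : ((3 : ZMod n)).val = 3 := by
    rw [show (3 : ZMod n) = ((3 : ℕ) : ZMod n) by norm_cast]
    exact ZMod.val_cast_of_lt (by omega)
  have c4 : ((4 : ZMod n)).val = 4 := by
    rw [show (4 : ZMod n) = ((4 : ℕ) : ZMod n) by norm_cast]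
    exact ZMod.val_cast_of_lt (by omega)
  have f0 : Fc n 0 = 0 := by unfold Fc; norm_num
  have f1 : Fc n 1 = 1 := by unfold Fc; norm_num
  have f2 : Fc n 2 = 2 := by unfold Fc; norm_num
  have f3 : Fc n 3 = 1 := by unfold Fc; norm_num
  have f4 : Fc n 4 = 0 := by unfold Fc; norm_num
  refine ⟨fun i => e (Fc n i.val), ?_, ⟨?_, ?_⟩, ?_, ?_, ?_, ?_, ?_⟩
  · intro i
    simp only [Set.mem_insert_iff, Set.mem_singleton_iff, he]
    split_ifs <;> tauto
  · intro i
    change e (Fc n i.val) ≠ e (Fc n (i+1).val)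
    intro hEq
    have hval : (i + 1).val = (i.val + 1) % n := by rw [ZMod.val_add, c1]
    rw [hval] at hEq
    exact Fc_proper n hn i.val i.val_lt
      (e_inj _ (Fc_lt _ _) _ (Fc_lt _ _) hEq)
  · intro i
    change ¬ (e (Fc n i.val) = e (Fc n (i+2).val) ∧ e (Fc n (i+1).val) = e (Fc n (i+3).val))
    intro hEq
    have hv1 : (i + 1).val = (i.val + 1) % n := by rw [ZMod.val_add, c1]
    have hv2 : (i + 2).val = (i.val + 2) % n := by rw [ZMod.val_add, c2]
    have hv3 : (i + 3).val = (i.val + 3) % n := by rw [ZMod.val_add, c3]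
    rw [hv1, hv2, hv3] at hEq
    exact Fc_star n hn i.val i.val_lt
      ⟨e_inj _ (Fc_lt _ _) _ (Fc_lt _ _) hEq.1,
       e_inj _ (Fc_lt _ _) _ (Fc_lt _ _) hEq.2⟩
  · show e (Fc n (0 : ZMod n).val) = a
    rw [ZMod.val_zero, f0]; simp [he]
  · show e (Fc n (1 : ZMod n).val) = b
    rw [c1, f1]; simp [he]
  · show e (Fc n (2 : ZMod n).val) = c
    rw [c2, f2]; simp [he]
  · show e (Fc n (3 : ZMod n).val) = b
    rw [c3, f3]; simp [he]
  · show e (Fc n (4 : ZMod n).val) = a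
    rw [c4, f4]; simp [he]
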